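/- arXiv:2305.13554 — 2 statements merged into one kernel-verified Lean document; each statement's English description precedes it below -/
import Mathlib

section
/- Let h be a nonconstant polynomial with complex coefficients having no repeated roots. Then ψ is jointly continuous on ℝ × (0,∞); in particular s ↦ ψ(s,r) is continuous at s = 0 even when the closed disk of radius r contains roots of h. -/
open MeasureTheory
open Set Module Polynomial Filter Metric
open scoped ENNReal Topology

/-- The reduced Kähler area function of the `Aₙ`-smoothing `{uv = h(z)}`:
`ψ(s,r)` is the Lebesgue (area) integral over the closed disk of radius `r` in `ℂ` of
`1 + |h′(z)|² / (2·√(|h(z)|² + s²))`, valued in `[0,∞]`. -/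
noncomputable def psiArea (h : Polynomial ℂ) (s r : ℝ) : ENNReal :=
  ∫⁻ z in Metric.closedBall (0:ℂ) r,
    ENNReal.ofReal
      (1 + ‖(Polynomial.derivative h).eval z‖^2 /
        (2 * Real.sqrt (‖h.eval z‖^2 + s^2)))

lemma lintegral_inv_dist_lt_top (a : ℂ) (C δ : ℝ) :
    ∫⁻ z in Metric.closedBall a δ, ENNReal.ofReal (C * ‖z - a‖⁻¹) < ∞ := by
  rcases le_or_gt C 0 with hC | hC
  · have : ∀ z : ℂ, ENNReal.ofReal (C * ‖z - a‖⁻¹) = 0 := by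
      intro z
      rw [ENNReal.ofReal_eq_zero]
      exact mul_nonpos_of_nonpos_of_nonneg hC (inv_nonneg.2 (norm_nonneg _))
    simp only [this, lintegral_zero]
    exact ENNReal.zero_lt_top
  · set μ := volume.restrict (Metric.closedBall a δ) with hμ
    have f_nn : (0:ℂ → ℝ) ≤ᵐ[μ] fun z => C * ‖z - a‖⁻¹ :=
      Filter.Eventually.of_forall fun z => by positivity
    have f_mble : AEMeasurable (fun z : ℂ => C * ‖z - a‖⁻¹) μ := by
      apply Measurable.aemeasurable
      exact measurable_const.mul ((measurable_id.sub measurable_const).norm.inv)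
    have key := lintegral_eq_lintegral_meas_le μ f_nn f_mble
    rw [key]
    have hsub : ∀ t : ℝ, 0 < t → {z : ℂ | t ≤ C * ‖z - a‖⁻¹} ⊆ Metric.closedBall a (C / t) := by
      intro t ht z hz
      simp only [mem_setOf_eq] at hz
      rw [Metric.mem_closedBall, dist_eq_norm]
      rcases eq_or_lt_of_le (norm_nonneg (z - a)) with h0 | h0
      · rw [← h0]; positivity
      · rw [← div_eq_mul_inv, le_div_iff₀ h0] at hz
        rw [le_div_iff₀ ht, mul_comm]
        exact hz
    have B_ne : volume (Metric.ball (0:ℂ) 1) ≠ ∞ := measure_ball_lt_top.ne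
    calc ∫⁻ t in Ioi 0, μ {z : ℂ | t ≤ C * ‖z - a‖⁻¹}
        ≤ ∫⁻ t in Ioc 0 1 ∪ Ioi 1, μ {z : ℂ | t ≤ C * ‖z - a‖⁻¹} :=
          lintegral_mono_set Ioi_subset_Ioc_union_Ioi
      _ ≤ (∫⁻ t in Ioc 0 1, μ {z : ℂ | t ≤ C * ‖z - a‖⁻¹})
            + ∫⁻ t in Ioi 1, μ {z : ℂ | t ≤ C * ‖z - a‖⁻¹} := lintegral_union_le _ _ _
      _ < ∞ := by
          refine ENNReal.add_lt_top.2 ⟨?_, ?_⟩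
          · calc ∫⁻ t in Ioc 0 1, μ {z : ℂ | t ≤ C * ‖z - a‖⁻¹}
                ≤ ∫⁻ _ in Ioc (0:ℝ) 1, volume (Metric.closedBall a δ) := by
                  refine setLIntegral_mono' measurableSet_Ioc fun t ht => ?_
                  calc μ {z : ℂ | t ≤ C * ‖z - a‖⁻¹} ≤ μ univ := measure_mono (subset_univ _)
                    _ = volume (Metric.closedBall a δ) := by
                        rw [hμ, Measure.restrict_apply_univ]
              _ = volume (Metric.closedBall a δ) * volume (Ioc (0:ℝ) 1) := setLIntegral_const _ _
              _ < ∞ := ENNReal.mul_lt_top measure_closedBall_lt_top (by simp)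
          · calc ∫⁻ t in Ioi 1, μ {z : ℂ | t ≤ C * ‖z - a‖⁻¹}
                ≤ ∫⁻ t in Ioi (1:ℝ),
                    ENNReal.ofReal (C ^ 2 * t ^ (-2:ℝ)) * volume (Metric.ball (0:ℂ) 1) := by
                  refine setLIntegral_mono' measurableSet_Ioi fun t ht => ?_
                  have ht1 : (1:ℝ) < t := ht
                  have ht0 : (0:ℝ) < t := lt_trans one_pos ht1
                  calc μ {z : ℂ | t ≤ C * ‖z - a‖⁻¹}
                      ≤ volume {z : ℂ | t ≤ C * ‖z - a‖⁻¹} := Measure.restrict_le_self _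
                    _ ≤ volume (Metric.closedBall a (C / t)) := measure_mono (hsub t ht0)
                    _ = ENNReal.ofReal ((C / t) ^ finrank ℝ ℂ) * volume (Metric.ball (0:ℂ) 1) :=
                        Measure.addHaar_closedBall volume a (by positivity)
                    _ = ENNReal.ofReal (C ^ 2 * t ^ (-2:ℝ)) * volume (Metric.ball (0:ℂ) 1) := by
                        congr 2
                        rw [Complex.finrank_real_complex, div_pow,
                          show ((-2:ℝ)) = -((2:ℕ):ℝ) by norm_num,
                          Real.rpow_neg ht0.le, Real.rpow_natCast, div_eq_mul_inv]
              _ = (∫⁻ t in Ioi (1:ℝ), ENNReal.ofReal (C ^ 2 * t ^ (-2:ℝ)))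
                    * volume (Metric.ball (0:ℂ) 1) := lintegral_mul_const' _ _ B_ne
              _ < ∞ := ENNReal.mul_lt_top
                  (IntegrableOn.setLIntegral_lt_top
                    ((integrableOn_Ioi_rpow_of_lt (show (-2:ℝ) < -1 by norm_num)
                      one_pos).const_mul (C ^ 2))) measure_ball_lt_top

lemma root_local (h : Polynomial ℂ) (hsq : Squarefree h) (a : ℂ) (ha : h.eval a = 0) :
    ∃ δ : ℝ, 0 < δ ∧ ∫⁻ z in Metric.closedBall a δ,
      ENNReal.ofReal (1 + (‖(Polynomial.derivative h).eval z‖)^2 /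
        (2 * ‖h.eval z‖)) < ∞ := by
  set g := h /ₘ (X - C a) with hg_def
  have hfac : (X - C a) * g = h := mul_divByMonic_eq_iff_isRoot.2 ha
  have heval : ∀ z : ℂ, h.eval z = (z - a) * g.eval z := by
    intro z; rw [← hfac]; simp [eval_mul, eval_sub, eval_X, eval_C]
  have hg : g.eval a ≠ 0 := by
    intro h0
    have hdvd : (X - C a) * (X - C a) ∣ h := by
      rw [← hfac]
      exact mul_dvd_mul_left _ (dvd_iff_isRoot.2 h0)
    exact (Polynomial.not_isUnit_X_sub_C a) (hsq _ hdvd)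
  set c := ‖g.eval a‖ / 2 with hc_def
  have hc : 0 < c := by
    have : 0 < ‖g.eval a‖ := by
      simpa [norm_pos_iff] using hg
    positivity
  have hU : IsOpen {z : ℂ | c < ‖g.eval z‖} :=
    isOpen_lt continuous_const (continuous_norm.comp g.continuous)
  have haU : a ∈ {z : ℂ | c < ‖g.eval z‖} := by
    simp only [mem_setOf_eq, hc_def]
    have : 0 < ‖g.eval a‖ := by simpa [norm_pos_iff] using hg
    linarith
  obtain ⟨ε, hε, hball⟩ := Metric.isOpen_iff.1 hU a haU
  refine ⟨ε/2, by positivity, ?_⟩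
  set K := Metric.closedBall a (ε/2) with hK_def
  have hKsub : K ⊆ {z : ℂ | c < ‖g.eval z‖} :=
    (Metric.closedBall_subset_ball (by linarith)).trans hball
  -- bound |h'|² on K
  obtain ⟨M, hM⟩ := (isCompact_closedBall a (ε/2)).exists_bound_of_continuousOn
    ((continuous_norm.comp (Polynomial.derivative h).continuous).pow 2).continuousOn
  have hM0 : ∀ z ∈ K, (‖(Polynomial.derivative h).eval z‖)^2 ≤ M := by
    intro z hz
    calc (‖(Polynomial.derivative h).eval z‖)^2
        ≤ ‖(‖(Polynomial.derivative h).eval z‖)^2‖ := le_abs_self _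
      _ ≤ M := hM z hz
  have hMnn : 0 ≤ M := by
    have : a ∈ K := Metric.mem_closedBall_self (by positivity)
    exact le_trans (by positivity) (hM0 a this)
  set Cst := M / (2 * c) with hCst_def
  have hCstnn : 0 ≤ Cst := by positivity
  have hpt : ∀ z ∈ K, (1 + (‖(Polynomial.derivative h).eval z‖)^2 /
      (2 * ‖h.eval z‖)) ≤ 1 + Cst * ‖z - a‖⁻¹ := by
    intro z hz
    rcases eq_or_ne z a with rfl | hza
    · simp [ha]
    · have hz0 : (0:ℝ) < ‖z - a‖ := by
        simpa [norm_pos_iff, sub_eq_zero] using hza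
      have hden : ‖z - a‖ * c ≤ ‖h.eval z‖ := by
        rw [heval z]
        rw [norm_mul]
        have : c ≤ ‖g.eval z‖ := (hKsub hz).le
        have h1 : ‖z - a‖ = ‖z - a‖ := rfl
        rw [← h1]
        exact mul_le_mul_of_nonneg_left this hz0.le
      have hdenpos : 0 < ‖z - a‖ * c := by positivity
      have key : (‖(Polynomial.derivative h).eval z‖)^2 /
          (2 * ‖h.eval z‖) ≤ M / (2 * (‖z - a‖ * c)) := by
        apply div_le_div₀ (by positivity) (hM0 z hz) (by positivity)
        linarith
      have : M / (2 * (‖z - a‖ * c)) = Cst * ‖z - a‖⁻¹ := by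
        rw [hCst_def]
        field_simp
      linarith [key, this ▸ key]
  calc ∫⁻ z in K, ENNReal.ofReal (1 + (‖(Polynomial.derivative h).eval z‖)^2 /
        (2 * ‖h.eval z‖))
      ≤ ∫⁻ z in K, (1 + ENNReal.ofReal (Cst * ‖z - a‖⁻¹)) := by
        refine setLIntegral_mono' measurableSet_closedBall fun z hz => ?_
        calc ENNReal.ofReal (1 + (‖(Polynomial.derivative h).eval z‖)^2 /
              (2 * ‖h.eval z‖))
            ≤ ENNReal.ofReal (1 + Cst * ‖z - a‖⁻¹) := ENNReal.ofReal_le_ofReal (hpt z hz)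
          _ = ENNReal.ofReal 1 + ENNReal.ofReal (Cst * ‖z - a‖⁻¹) :=
              ENNReal.ofReal_add (by norm_num) (by positivity)
          _ = 1 + ENNReal.ofReal (Cst * ‖z - a‖⁻¹) := by rw [ENNReal.ofReal_one]
    _ = (∫⁻ _ in K, (1:ℝ≥0∞)) + ∫⁻ z in K, ENNReal.ofReal (Cst * ‖z - a‖⁻¹) := by
        rw [lintegral_add_left measurable_const]
    _ < ∞ := by
        refine ENNReal.add_lt_top.2 ⟨?_, ?_⟩
        · rw [setLIntegral_const]
          exact ENNReal.mul_lt_top (by simp) measure_closedBall_lt_top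
        · exact lintegral_inv_dist_lt_top a Cst (ε/2)

lemma bound_finite (h : Polynomial ℂ) (hsq : Squarefree h) (R : ℝ) :
    ∫⁻ z in Metric.closedBall (0:ℂ) R,
      ENNReal.ofReal (1 + (‖(Polynomial.derivative h).eval z‖)^2 /
        (2 * ‖h.eval z‖)) < ∞ := by
  have hne : h ≠ 0 := hsq.ne_zero
  -- choice of radii
  have hch : ∀ a : ℂ, ∃ δ : ℝ, 0 < δ ∧ (h.eval a = 0 →
      ∫⁻ z in Metric.closedBall a δ,
        ENNReal.ofReal (1 + (‖(Polynomial.derivative h).eval z‖)^2 /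
          (2 * ‖h.eval z‖)) < ∞) := by
    intro a
    by_cases ha : h.eval a = 0
    · obtain ⟨δ, hδ, hint⟩ := root_local h hsq a ha
      exact ⟨δ, hδ, fun _ => hint⟩
    · exact ⟨1, one_pos, fun h0 => absurd h0 ha⟩
  choose δ hδpos hδint using hch
  set S : Finset ℂ := h.roots.toFinset with hS_def
  have hSroot : ∀ a ∈ S, h.eval a = 0 := by
    intro a haS
    have := Multiset.mem_toFinset.1 haS
    exact (mem_roots hne).1 this
  set K := Metric.closedBall (0:ℂ) R \ ⋃ a ∈ S, Metric.ball a (δ a) with hK_def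
  have hKcomp : IsCompact K :=
    (isCompact_closedBall (0:ℂ) R).diff (isOpen_biUnion fun a _ => Metric.isOpen_ball)
  have hKne : ∀ z ∈ K, h.eval z ≠ 0 := by
    intro z hz h0
    apply hz.2
    have hzS : z ∈ S := Multiset.mem_toFinset.2 ((mem_roots hne).2 h0)
    exact mem_biUnion hzS (Metric.mem_ball_self (hδpos z))
  -- bound on K
  have hcont : ContinuousOn (fun z : ℂ => 1 + (‖(Polynomial.derivative h).eval z‖)^2 /
      (2 * ‖h.eval z‖)) K := by
    refine continuousOn_const.add (ContinuousOn.div ?_ ?_ ?_)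
    · exact ((continuous_norm.comp (Polynomial.derivative h).continuous).pow 2).continuousOn
    · exact (continuous_const.mul (continuous_norm.comp h.continuous)).continuousOn
    · intro z hz
      have := hKne z hz
      simp only [mul_ne_zero_iff]
      exact ⟨two_ne_zero, by simpa [norm_ne_zero_iff] using this⟩
  obtain ⟨M, hM⟩ := hKcomp.exists_bound_of_continuousOn hcont
  have hKint : ∫⁻ z in K, ENNReal.ofReal (1 + (‖(Polynomial.derivative h).eval z‖)^2 /
      (2 * ‖h.eval z‖)) < ∞ := by
    have hKm : MeasurableSet K :=
      measurableSet_closedBall.diff (MeasurableSet.biUnion S.countable_toSet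
        (fun a _ => measurableSet_ball))
    calc ∫⁻ z in K, ENNReal.ofReal (1 + (‖(Polynomial.derivative h).eval z‖)^2 /
          (2 * ‖h.eval z‖))
        ≤ ∫⁻ _ in K, ENNReal.ofReal M := by
          refine setLIntegral_mono' hKm fun z hz => ?_
          exact ENNReal.ofReal_le_ofReal (le_trans (le_abs_self _) (hM z hz))
      _ = ENNReal.ofReal M * volume K := setLIntegral_const _ _
      _ < ∞ := ENNReal.mul_lt_top ENNReal.ofReal_lt_top
          (lt_of_le_of_lt (measure_mono diff_subset) measure_closedBall_lt_top)
  -- covering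
  have hcover : Metric.closedBall (0:ℂ) R ⊆ K ∪ ⋃ a ∈ S, Metric.closedBall a (δ a) := by
    intro z hz
    by_cases hzU : z ∈ ⋃ a ∈ S, Metric.ball a (δ a)
    · right
      obtain ⟨a, haS, hza⟩ := mem_iUnion₂.1 hzU
      exact mem_iUnion₂.2 ⟨a, haS, Metric.ball_subset_closedBall hza⟩
    · exact Or.inl ⟨hz, hzU⟩
  calc ∫⁻ z in Metric.closedBall (0:ℂ) R,
        ENNReal.ofReal (1 + (‖(Polynomial.derivative h).eval z‖)^2 /
          (2 * ‖h.eval z‖))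
      ≤ ∫⁻ z in K ∪ ⋃ a ∈ S, Metric.closedBall a (δ a),
        ENNReal.ofReal (1 + (‖(Polynomial.derivative h).eval z‖)^2 /
          (2 * ‖h.eval z‖)) := lintegral_mono_set hcover
    _ ≤ (∫⁻ z in K, ENNReal.ofReal (1 + (‖(Polynomial.derivative h).eval z‖)^2 /
          (2 * ‖h.eval z‖)))
        + ∫⁻ z in ⋃ a ∈ S, Metric.closedBall a (δ a),
        ENNReal.ofReal (1 + (‖(Polynomial.derivative h).eval z‖)^2 /
          (2 * ‖h.eval z‖)) := lintegral_union_le _ _ _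
    _ < ∞ := by
        refine ENNReal.add_lt_top.2 ⟨hKint, ?_⟩
        have hrw : (⋃ a ∈ S, Metric.closedBall a (δ a))
            = ⋃ a : {x : ℂ // x ∈ S}, Metric.closedBall (a:ℂ) (δ a) := by
          ext z; simp
        rw [hrw]
        calc ∫⁻ z in ⋃ a : {x : ℂ // x ∈ S}, Metric.closedBall (a:ℂ) (δ a),
            ENNReal.ofReal (1 + (‖(Polynomial.derivative h).eval z‖)^2 /
              (2 * ‖h.eval z‖))
            ≤ ∑' (a : {x : ℂ // x ∈ S}), ∫⁻ z in Metric.closedBall (a:ℂ) (δ a),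
              ENNReal.ofReal (1 + (‖(Polynomial.derivative h).eval z‖)^2 /
                (2 * ‖h.eval z‖)) := lintegral_iUnion_le _ _
          _ < ∞ := by
              rw [tsum_fintype]
              refine ENNReal.sum_lt_top.2 fun a _ => ?_
              exact hδint a (hSroot a a.2)

lemma fI_meas (h : Polynomial ℂ) (s : ℝ) :
    Measurable (fun z : ℂ => ENNReal.ofReal
      (1 + (‖(Polynomial.derivative h).eval z‖)^2 /
        (2 * Real.sqrt ((‖h.eval z‖)^2 + s^2)))) := by
  apply Measurable.ennreal_ofReal
  apply Measurable.add measurable_const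
  apply Measurable.div
  · exact ((continuous_norm.comp (Polynomial.derivative h).continuous).pow 2).measurable
  · exact (continuous_const.mul (Real.continuous_sqrt.comp
      (((continuous_norm.comp h.continuous).pow 2).add continuous_const))).measurable

lemma psiArea_continuousAt (h : Polynomial ℂ) (hsq : Squarefree h) (s₀ r₀ : ℝ) (hr : 0 < r₀) :
    ContinuousAt (fun p : ℝ × ℝ => psiArea h p.1 p.2) (s₀, r₀) := by
  have hne : h ≠ 0 := hsq.ne_zero
  set fI : ℝ → ℂ → ℝ≥0∞ := fun s z => ENNReal.ofReal
      (1 + (‖(Polynomial.derivative h).eval z‖)^2 /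
        (2 * Real.sqrt ((‖h.eval z‖)^2 + s^2))) with hfI_def
  set F : ℝ × ℝ → ℂ → ℝ≥0∞ :=
      fun p => (Metric.closedBall (0:ℂ) p.2).indicator (fI p.1) with hF_def
  have hpsi : ∀ p : ℝ × ℝ, psiArea h p.1 p.2 = ∫⁻ z, F p z := by
    intro p
    rw [hF_def]
    rw [lintegral_indicator measurableSet_closedBall]
    rfl
  set bound : ℂ → ℝ≥0∞ := (Metric.closedBall (0:ℂ) (r₀+1)).indicator
      (fun z => ENNReal.ofReal (1 + (‖(Polynomial.derivative h).eval z‖)^2 /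
        (2 * ‖h.eval z‖))) with hbound_def
  have hroots0 : volume {z : ℂ | h.eval z = 0} = 0 :=
    (Polynomial.finite_setOf_isRoot hne).measure_zero _
  have hsphere0 : volume (Metric.sphere (0:ℂ) r₀) = 0 :=
    Measure.addHaar_sphere volume 0 r₀
  unfold ContinuousAt
  simp only [hpsi]
  rw [show psiArea h s₀ r₀ = ∫⁻ z, F (s₀, r₀) z from hpsi (s₀, r₀)]
  apply tendsto_lintegral_filter_of_dominated_convergence bound
  · exact Eventually.of_forall fun p =>
      (fI_meas h p.1).indicator measurableSet_closedBall
  · -- domination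
    have hev : {p : ℝ × ℝ | p.2 < r₀ + 1} ∈ 𝓝 (s₀, r₀) := by
      apply (isOpen_lt continuous_snd continuous_const).mem_nhds
      simp only [mem_setOf_eq]
      linarith
    filter_upwards [hev] with p hp
    rw [ae_iff]
    apply measure_mono_null _ hroots0
    intro z hz
    simp only [mem_setOf_eq]
    by_contra hzne
    apply hz
    by_cases hmem : z ∈ Metric.closedBall (0:ℂ) p.2
    · simp only [hF_def]
      rw [Set.indicator_of_mem hmem]
      have hmem' : z ∈ Metric.closedBall (0:ℂ) (r₀+1) := by
        rw [Metric.mem_closedBall] at hmem ⊢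
        linarith [hp]
      simp only [hbound_def]
      rw [Set.indicator_of_mem hmem']
      apply ENNReal.ofReal_le_ofReal
      have habs : 0 < ‖h.eval z‖ := by
        simpa [norm_pos_iff] using hzne
      have hsq' : ‖h.eval z‖ ≤ Real.sqrt ((‖h.eval z‖)^2 + p.1^2) := by
        rw [show ‖h.eval z‖ = Real.sqrt ((‖h.eval z‖)^2) by
          rw [Real.sqrt_sq habs.le]]
        apply Real.sqrt_le_sqrt
        rw [Real.sq_sqrt (by positivity)]
        nlinarith [sq_nonneg p.1]
      have := div_le_div_of_nonneg_left (by positivity :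
          (0:ℝ) ≤ (‖(Polynomial.derivative h).eval z‖)^2)
          (by positivity : (0:ℝ) < 2 * ‖h.eval z‖)
          (by linarith : 2 * ‖h.eval z‖
            ≤ 2 * Real.sqrt ((‖h.eval z‖)^2 + p.1^2))
      linarith
    · simp only [hF_def]
      rw [Set.indicator_of_notMem hmem]
      exact zero_le
  · -- finiteness of the bound
    rw [hbound_def, lintegral_indicator measurableSet_closedBall]
    exact (bound_finite h hsq (r₀+1)).ne
  · -- pointwise convergence
    rw [ae_iff]
    apply measure_mono_null _ (measure_union_null hroots0 hsphere0)
    intro z hz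
    simp only [mem_setOf_eq, mem_union, Metric.mem_sphere]
    by_contra hcon
    push_neg at hcon
    obtain ⟨hzne, hzsp⟩ := hcon
    apply hz
    rcases lt_or_gt_of_ne hzsp with hlt | hgt
    · -- z inside the ball
      have hev : ∀ᶠ p : ℝ × ℝ in 𝓝 (s₀, r₀), F p z = fI p.1 z := by
        have : {p : ℝ × ℝ | dist z 0 < p.2} ∈ 𝓝 (s₀, r₀) :=
          (isOpen_lt continuous_const continuous_snd).mem_nhds (by simpa using hlt)
        filter_upwards [this] with p hp
        simp only [hF_def]
        rw [Set.indicator_of_mem (Metric.mem_closedBall.2 hp.le)]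
      have hFz : F (s₀, r₀) z = fI s₀ z := by
        simp only [hF_def]
        rw [Set.indicator_of_mem (Metric.mem_closedBall.2 hlt.le)]
      rw [hFz]
      have habs : 0 < ‖h.eval z‖ := by
        simpa [norm_pos_iff] using hzne
      have hca : ContinuousAt (fun s : ℝ => fI s z) s₀ := by
        rw [hfI_def]
        apply ENNReal.continuous_ofReal.continuousAt.comp
        apply ContinuousAt.add continuousAt_const
        apply ContinuousAt.div continuousAt_const
        · exact (continuous_const.mul (Real.continuous_sqrt.comp
            (continuous_const.add (continuous_pow 2)))).continuousAt
        · have : 0 < Real.sqrt ((‖h.eval z‖)^2 + s₀^2) := by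
            apply Real.sqrt_pos.2
            nlinarith [sq_nonneg s₀]
          positivity
      exact (hca.tendsto.comp (continuousAt_fst : ContinuousAt Prod.fst (s₀, r₀))).congr' (hev.mono fun p hp => hp.symm)
    · -- z outside the ball
      have hev : ∀ᶠ p : ℝ × ℝ in 𝓝 (s₀, r₀), F p z = 0 := by
        have : {p : ℝ × ℝ | p.2 < dist z 0} ∈ 𝓝 (s₀, r₀) :=
          (isOpen_lt continuous_snd continuous_const).mem_nhds (by simpa using hgt)
        filter_upwards [this] with p hp
        simp only [hF_def]
        rw [Set.indicator_of_notMem (by simpa using not_le.2 hp)]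
      have hFz : F (s₀, r₀) z = 0 := by
        simp only [hF_def]
        rw [Set.indicator_of_notMem (by simpa using not_le.2 hgt)]
      rw [hFz]
      exact tendsto_const_nhds.congr' (hev.mono fun p hp => hp.symm)

/-- For a nonconstant polynomial `h` with no repeated roots, `ψ` is jointly
continuous on `ℝ × (0,∞)`; in particular `s ↦ ψ(s,r)` is continuous at `s = 0` even when
the closed disk of radius `r` contains roots of `h`. -/
theorem psiArea_continuousOn
    (h : Polynomial ℂ) (hdeg : 0 < h.natDegree) (hsq : Squarefree h) :
    ContinuousOn (fun p : ℝ × ℝ => psiArea h p.1 p.2) (Set.univ ×ˢ Set.Ioi (0:ℝ)) ∧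
    (∀ r : ℝ, 0 < r → ContinuousAt (fun s => psiArea h s r) 0) := by
  constructor
  · intro p hp
    have := psiArea_continuousAt h hsq p.1 p.2 hp.2
    exact this.continuousWithinAt
  · intro r hr
    have hg : ContinuousAt (fun p : ℝ × ℝ => psiArea h p.1 p.2) ((fun s : ℝ => (s, r)) 0) :=
      psiArea_continuousAt h hsq 0 r hr
    have hf : ContinuousAt (fun s : ℝ => (s, r)) 0 :=
      (continuous_id.prodMk continuous_const).continuousAt
    exact ContinuousAt.comp (f := fun s : ℝ => (s, r))
      (g := fun p : ℝ × ℝ => psiArea h p.1 p.2) hg hf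
end

section
/- Let y₁, y₂ ∈ Λ^× with y₁ ≠ −1, set s := val(y₁), fix k₀ ∈ {0, …, n+1}, and set c := val(y₂) + k₀·min(0, s). Define (x, y) by y := y₁ and: if k₀ ≤ n, x_{k₀} := (1+y₁)/y₂, x_{k₀+1} := y₂, and x_j := 1 for j ∉ {k₀, k₀+1}; if k₀ = n+1, x_n := 1/y₂, x_{n+1} := y₂·(1+y₁), and x_j := 1 for j ≤ n−1 (so in both cases ∏_{j=0}^{n+1} x_j = 1 + y and all x_j ∈ Λ^×). Assume either s ≠ 0, or s = 0 and ψ_{k₀−1}(0) < c < ψ_{k₀}(0) (conventions ψ_{−1} = −∞, ψ_{n+1} = +∞). Then F(x, y) = γ(s, c). -/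
/-- The Novikov field `Λ = ℂ((T^ℝ))`, modeled by Hahn series. -/
abbrev Nov : Type := HahnSeries ℝ ℂ

/-- The additive valuation `val : Λ → ℝ` (the order of a nonzero Hahn series;
junk value at `0`). -/
noncomputable def val (x : Nov) : ℝ := x.order

/-- The `(k+1)`-th *order statistic* of a finite multiset of reals: the entry at index `k`
of the list sorted in nondecreasing order (junk value `0` if `k` is out of range). -/
noncomputable def orderStat (s : Multiset ℝ) (k : ℕ) : ℝ := (s.sort (· ≤ ·)).getD k 0

/-- The map `γ : ℝ² → ℝ^{n+3}`, `γ(s,c) = (γ₀(s,c), …, γ_{n+1}(s,c), s)` where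
`γ_k(s,c) = {c, ψ 0 s, …, ψ n s}_[k]` is the `(k+1)`-th order statistic. -/
noncomputable def gammaMap (n : ℕ) (ψ : Fin (n+1) → ℝ → ℝ) (p : ℝ × ℝ) :
    Fin (n+3) → ℝ :=
  fun i => if (i : ℕ) = n + 2 then p.1
    else orderStat (p.2 ::ₘ Finset.univ.val.map (fun j => ψ j p.1)) (i : ℕ)

/-- The tropically continuous fibration `F` in homogeneous coordinates:
`F_k(x,y) = {Σ_j (j−k)·val(x_j) + k·min(0, val y), ψ 0 (val y), …, ψ n (val y)}_[k]`
for `0 ≤ k ≤ n+1`, and last component `val y`. -/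
noncomputable def Fmap (n : ℕ) (ψ : Fin (n+1) → ℝ → ℝ)
    (x : Fin (n+2) → Nov) (y : Nov) : Fin (n+3) → ℝ :=
  fun i => if (i : ℕ) = n + 2 then val y
    else orderStat
      (((∑ j : Fin (n+2), (((j:ℕ):ℝ) - ((i:ℕ):ℝ)) * val (x j))
          + ((i:ℕ):ℝ) * min 0 (val y))
        ::ₘ Finset.univ.val.map (fun j => ψ j (val y))) (i : ℕ)

/- ### Auxiliary lemmas -/

lemma sorted_getD_eq : ∀ (l : List ℝ), l.Pairwise (· ≤ ·) → ∀ (k : ℕ) (b : ℝ),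
    Multiset.countP (fun t => t < b) (l : Multiset ℝ) ≤ k →
    k < Multiset.countP (fun t => t ≤ b) (l : Multiset ℝ) → l.getD k 0 = b := by
  intro l
  induction l with
  | nil => intro _ k b _ h2; simp at h2
  | cons x xs ih =>
    intro hs k b h1 h2
    rw [List.pairwise_cons] at hs
    simp only [← Multiset.cons_coe, Multiset.countP_cons] at h1 h2
    by_cases hx : x < b
    · rw [if_pos hx] at h1
      rw [if_pos hx.le] at h2
      obtain ⟨k, rfl⟩ : ∃ k', k = k' + 1 := ⟨k - 1, by omega⟩
      rw [List.getD_cons_succ]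
      exact ih hs.2 k b (by omega) (by omega)
    · rw [if_neg hx] at h1
      by_cases hxb : x ≤ b
      · have hxe : x = b := le_antisymm hxb (not_lt.1 hx)
        rw [if_pos hxb] at h2
        cases k with
        | zero => simpa using hxe
        | succ k =>
          rw [List.getD_cons_succ]
          refine ih hs.2 k b ?_ (by omega)
          have h0 : Multiset.countP (fun t => t < b) (↑xs : Multiset ℝ) = 0 := by
            rw [Multiset.countP_eq_zero]
            intro t ht
            have hxt := hs.1 t (Multiset.mem_coe.1 ht)
            rw [hxe] at hxt
            exact not_lt.2 hxt
          omega
      · exfalso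
        have h0 : Multiset.countP (fun t => t ≤ b) (↑xs : Multiset ℝ) = 0 := by
          rw [Multiset.countP_eq_zero]
          intro t ht htb
          exact hxb (le_trans (hs.1 t (Multiset.mem_coe.1 ht)) htb)
        rw [if_neg hxb] at h2
        omega

lemma orderStat_eq_of_countP (m : Multiset ℝ) (k : ℕ) (b : ℝ)
    (h1 : Multiset.countP (fun t => t < b) m ≤ k)
    (h2 : k < Multiset.countP (fun t => t ≤ b) m) : orderStat m k = b := by
  have h := sorted_getD_eq (m.sort (· ≤ ·)) (Multiset.pairwise_sort m _) k b
  rw [Multiset.sort_eq] at h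
  exact h h1 h2

lemma card_filter_coe_lt (m t : ℕ) (ht : t ≤ m) :
    (Finset.univ.filter (fun j : Fin m => (j : ℕ) < t)).card = t := by
  rw [Finset.card_filter, Fin.sum_univ_eq_sum_range (fun j => if j < t then 1 else 0) m,
      ← Finset.card_filter]
  have h : (Finset.range m).filter (fun j => j < t) = Finset.range t := by
    ext j; simp only [Finset.mem_filter, Finset.mem_range]; omega
  rw [h, Finset.card_range]

lemma countP_cons_map (n : ℕ) (ψv : Fin (n+1) → ℝ) (a : ℝ) (p : ℝ → Prop) [DecidablePred p] :
    Multiset.countP p (a ::ₘ Finset.univ.val.map ψv)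
      = (Finset.univ.filter (fun j => p (ψv j))).card + (if p a then 1 else 0) := by
  rw [Multiset.countP_cons, Multiset.countP_map]
  rfl

lemma orderStat_cons_gt (n : ℕ) (ψv : Fin (n+1) → ℝ) (hmono : StrictMono ψv)
    (k : ℕ) (hk : k < n+1) (a : ℝ) (ha : ψv ⟨k, hk⟩ < a) :
    orderStat (a ::ₘ Finset.univ.val.map ψv) k = ψv ⟨k, hk⟩ := by
  apply orderStat_eq_of_countP
  · rw [countP_cons_map, if_neg (not_lt.2 ha.le)]
    have h : Finset.univ.filter (fun j => ψv j < ψv ⟨k, hk⟩)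
        = Finset.univ.filter (fun j : Fin (n+1) => (j : ℕ) < k) := by
      ext j
      simp only [Finset.mem_filter, Finset.mem_univ, true_and, hmono.lt_iff_lt, Fin.lt_def]
    rw [h, card_filter_coe_lt _ _ (by omega)]
    omega
  · rw [countP_cons_map, if_neg (not_le.2 ha)]
    have h : Finset.univ.filter (fun j => ψv j ≤ ψv ⟨k, hk⟩)
        = Finset.univ.filter (fun j : Fin (n+1) => (j : ℕ) < k + 1) := by
      ext j
      simp only [Finset.mem_filter, Finset.mem_univ, true_and, hmono.le_iff_le, Fin.le_def]
      omega
    rw [h, card_filter_coe_lt _ _ (by omega)]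
    omega

lemma orderStat_cons_lt (n : ℕ) (ψv : Fin (n+1) → ℝ) (hmono : StrictMono ψv)
    (k : ℕ) (hk1 : 1 ≤ k) (hk : k - 1 < n+1) (a : ℝ) (ha : a < ψv ⟨k-1, hk⟩) :
    orderStat (a ::ₘ Finset.univ.val.map ψv) k = ψv ⟨k-1, hk⟩ := by
  apply orderStat_eq_of_countP
  · rw [countP_cons_map, if_pos ha]
    have h : Finset.univ.filter (fun j => ψv j < ψv ⟨k-1, hk⟩)
        = Finset.univ.filter (fun j : Fin (n+1) => (j : ℕ) < k - 1) := by
      ext j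
      simp only [Finset.mem_filter, Finset.mem_univ, true_and, hmono.lt_iff_lt, Fin.lt_def]
    rw [h, card_filter_coe_lt _ _ (by omega)]
    omega
  · rw [countP_cons_map, if_pos ha.le]
    have h : Finset.univ.filter (fun j => ψv j ≤ ψv ⟨k-1, hk⟩)
        = Finset.univ.filter (fun j : Fin (n+1) => (j : ℕ) < k) := by
      ext j
      simp only [Finset.mem_filter, Finset.mem_univ, true_and, hmono.le_iff_le, Fin.le_def]
      omega
    rw [h, card_filter_coe_lt _ _ (by omega)]
    omega

lemma val_mul {x y : Nov} (hx : x ≠ 0) (hy : y ≠ 0) : val (x * y) = val x + val y :=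
  HahnSeries.order_mul hx hy

lemma val_one : val 1 = 0 := HahnSeries.order_one

lemma val_inv {x : Nov} (hx : x ≠ 0) : val x⁻¹ = - val x := by
  have h := HahnSeries.order_mul hx (inv_ne_zero hx)
  rw [mul_inv_cancel₀ hx, HahnSeries.order_one] at h
  have h' : val x + val x⁻¹ = 0 := h.symm
  unfold val at *
  linarith

lemma val_div {x y : Nov} (hx : x ≠ 0) (hy : y ≠ 0) : val (x / y) = val x - val y := by
  rw [div_eq_mul_inv, val_mul hx (inv_ne_zero hy), val_inv hy]
  ring

lemma val_add_eq_left {x y : Nov} (hx : x ≠ 0) (hy : y ≠ 0) (h : val x < val y) :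
    val (x + y) = val x := by
  have hx' : x.orderTop < y.orderTop := by
    rw [← HahnSeries.order_eq_orderTop_of_ne_zero hx, ← HahnSeries.order_eq_orderTop_of_ne_zero hy]
    exact_mod_cast h
  have ht := HahnSeries.orderTop_add_eq_left hx'
  have hne : x + y ≠ 0 := HahnSeries.orderTop_ne_top.mp
    (by rw [ht]; exact HahnSeries.orderTop_ne_top.mpr hx)
  rw [← HahnSeries.order_eq_orderTop_of_ne_zero hne, ← HahnSeries.order_eq_orderTop_of_ne_zero hx] at ht
  exact_mod_cast ht

lemma val_add_ge {x y : Nov} (hxy : x + y ≠ 0) : min (val x) (val y) ≤ val (x + y) :=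
  HahnSeries.min_order_le_order_add hxy

/-- The third conclusion, derived from the unified formula for the weighted sum of
valuations. -/
lemma Fmap_eq_of_sum (n : ℕ) (ψ : Fin (n+1) → ℝ → ℝ)
    (hord : ∀ s : ℝ, StrictMono fun j => ψ j s)
    (y₁ y₂ : Nov) (hy₁ : y₁ ≠ 0) (h1y : (1 : Nov) + y₁ ≠ 0)
    (k₀ : Fin (n+2)) (s c : ℝ) (hs : s = val y₁)
    (hc : c = val y₂ + ((k₀:ℕ):ℝ) * min 0 s)
    (x : Fin (n+2) → Nov)
    (hsum : ∀ r : ℝ, (∑ j : Fin (n+2), (((j:ℕ):ℝ) - r) * val (x j))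
        = (((k₀:ℕ):ℝ) - r) * val (1 + y₁) + val y₂)
    (hreg : s ≠ 0 ∨ (s = 0 ∧
      (∀ j : Fin (n+1), (j:ℕ) < (k₀:ℕ) → ψ j 0 < c) ∧
      (∀ j : Fin (n+1), (k₀:ℕ) ≤ (j:ℕ) → c < ψ j 0))) :
    Fmap n ψ x y₁ = gammaMap n ψ (s, c) := by
  have hk₀le : (k₀ : ℕ) ≤ n + 1 := by have := k₀.isLt; omega
  funext i
  simp only [Fmap, gammaMap]
  by_cases hi : (i:ℕ) = n + 2
  · rw [if_pos hi, if_pos hi]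
    exact hs.symm
  · rw [if_neg hi, if_neg hi]
    have hkn : (i:ℕ) ≤ n + 1 := by have := i.isLt; omega
    simp only [← hs]
    rw [hsum ((i:ℕ):ℝ)]
    rcases hreg with hsne | ⟨hs0, hlt, hgt⟩
    · -- `s ≠ 0`: the inserted element equals `c` on the nose
      have hw : val (1 + y₁) = min 0 s := by
        rcases lt_or_gt_of_ne hsne with hneg | hpos
        · rw [min_eq_right hneg.le, add_comm,
            val_add_eq_left hy₁ one_ne_zero (by rw [val_one, ← hs]; exact hneg)]
          exact hs.symm
        · rw [min_eq_left hpos.le,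
            val_add_eq_left one_ne_zero hy₁ (by rw [val_one, ← hs]; exact hpos)]
          exact val_one
      rw [show (((k₀:ℕ):ℝ) - ((i:ℕ):ℝ)) * val (1 + y₁) + val y₂ + ((i:ℕ):ℝ) * min 0 s = c by
        rw [hw, hc]; ring]
    · -- `s = 0`
      subst hs0
      have hw0 : (0:ℝ) ≤ val (1 + y₁) := by
        have h := val_add_ge (x := (1 : Nov)) (y := y₁) h1y
        rw [val_one, ← hs] at h
        simpa using h
      have hc0 : c = val y₂ := by rw [hc]; simp
      rw [show (((k₀:ℕ):ℝ) - ((i:ℕ):ℝ)) * val (1 + y₁) + val y₂ + ((i:ℕ):ℝ) * min 0 (0:ℝ)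
            = c + (((k₀:ℕ):ℝ) - ((i:ℕ):ℝ)) * val (1 + y₁) by rw [hc0]; simp; ring]
      rcases lt_trichotomy ((i:ℕ)) ((k₀:ℕ)) with hik | hik | hik
      · -- `k < k₀`
        have kB : (i:ℕ) < n + 1 := by omega
        have hC : ψ ⟨(i:ℕ), kB⟩ 0 < c := hlt ⟨(i:ℕ), kB⟩ hik
        have hge : ((i:ℕ):ℝ) ≤ ((k₀:ℕ):ℝ) := Nat.cast_le.2 hik.le
        have hA : ψ ⟨(i:ℕ), kB⟩ 0 < c + (((k₀:ℕ):ℝ) - ((i:ℕ):ℝ)) * val (1 + y₁) :=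
          lt_of_lt_of_le hC (le_add_of_nonneg_right (mul_nonneg (sub_nonneg.2 hge) hw0))
        rw [orderStat_cons_gt n (fun j => ψ j 0) (hord 0) ((i:ℕ)) kB _ hA,
          orderStat_cons_gt n (fun j => ψ j 0) (hord 0) ((i:ℕ)) kB c hC]
      · -- `k = k₀`
        rw [show c + (((k₀:ℕ):ℝ) - ((i:ℕ):ℝ)) * val (1 + y₁) = c by rw [hik]; ring]
      · -- `k > k₀`
        have k1 : 1 ≤ (i:ℕ) := by omega
        have kB : (i:ℕ) - 1 < n + 1 := by omega
        have hC : c < ψ ⟨(i:ℕ) - 1, kB⟩ 0 := hgt ⟨(i:ℕ) - 1, kB⟩ (by simp; omega)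
        have hge : ((k₀:ℕ):ℝ) ≤ ((i:ℕ):ℝ) := Nat.cast_le.2 hik.le
        have hA : c + (((k₀:ℕ):ℝ) - ((i:ℕ):ℝ)) * val (1 + y₁) < ψ ⟨(i:ℕ) - 1, kB⟩ 0 := by
          nlinarith
        rw [orderStat_cons_lt n (fun j => ψ j 0) (hord 0) ((i:ℕ)) k1 kB _ hA,
          orderStat_cons_lt n (fun j => ψ j 0) (hord 0) ((i:ℕ)) k1 kB c hC]

/-- Let `y₁, y₂ ∈ Λ^×` with `y₁ ≠ −1`, `s := val y₁`, `k₀ ∈ {0,…,n+1}`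
and `c := val y₂ + k₀·min(0,s)`, and let `(x, y₁)` be the `k₀`-th chart embedding in
homogeneous coordinates.  If `s ≠ 0`, or `s = 0` and `ψ (k₀−1) 0 < c < ψ k₀ 0` (with the
conventions `ψ₋₁ = −∞`, `ψ_{n+1} = +∞`), then all `x j` are invertible,
`∏_j x_j = 1 + y₁`, and `F(x, y₁) = γ(s, c)`. -/
theorem Fmap_chart_eq_gamma (n : ℕ) (ψ : Fin (n+1) → ℝ → ℝ)
    (hord : ∀ s : ℝ, StrictMono fun j => ψ j s)
    (y₁ y₂ : Nov) (hy₁ : y₁ ≠ 0) (hy₂ : y₂ ≠ 0) (hy₁' : y₁ ≠ -1)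
    (k₀ : Fin (n+2)) (s c : ℝ) (hs : s = val y₁)
    (hc : c = val y₂ + ((k₀:ℕ):ℝ) * min 0 s)
    (x : Fin (n+2) → Nov)
    (hx : x = fun j : Fin (n+2) =>
      if (k₀:ℕ) ≤ n then
        (if (j:ℕ) = (k₀:ℕ) then (1 + y₁) / y₂
         else if (j:ℕ) = (k₀:ℕ) + 1 then y₂ else 1)
      else
        (if (j:ℕ) = n then 1 / y₂
         else if (j:ℕ) = n + 1 then y₂ * (1 + y₁) else 1))
    (hreg : s ≠ 0 ∨ (s = 0 ∧
      (∀ j : Fin (n+1), (j:ℕ) < (k₀:ℕ) → ψ j 0 < c) ∧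
      (∀ j : Fin (n+1), (k₀:ℕ) ≤ (j:ℕ) → c < ψ j 0))) :
    (∀ j, x j ≠ 0) ∧ (∏ j, x j) = 1 + y₁ ∧
    Fmap n ψ x y₁ = gammaMap n ψ (s, c) := by
  have h1y : (1 : Nov) + y₁ ≠ 0 := by
    intro h
    apply hy₁'
    rw [add_comm] at h
    exact eq_neg_of_add_eq_zero_left h
  have hxj : ∀ j : Fin (n+2), x j =
      (if (k₀:ℕ) ≤ n then
        (if (j:ℕ) = (k₀:ℕ) then (1 + y₁) / y₂
         else if (j:ℕ) = (k₀:ℕ) + 1 then y₂ else 1)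
      else
        (if (j:ℕ) = n then 1 / y₂
         else if (j:ℕ) = n + 1 then y₂ * (1 + y₁) else 1)) := fun j => by rw [hx]
  have hxne : ∀ j, x j ≠ 0 := by
    intro j
    rw [hxj j]
    split_ifs
    · exact div_ne_zero h1y hy₂
    · exact hy₂
    · exact one_ne_zero
    · exact div_ne_zero one_ne_zero hy₂
    · exact mul_ne_zero hy₂ h1y
    · exact one_ne_zero
  have hk₀lt : (k₀ : ℕ) < n + 2 := k₀.isLt
  rcases le_or_gt (k₀ : ℕ) n with hk | hk
  · -- chart with `k₀ ≤ n`
    obtain ⟨a, b, hav, hbv⟩ : ∃ a b : Fin (n+2), (a:ℕ) = (k₀:ℕ) ∧ (b:ℕ) = (k₀:ℕ)+1 :=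
      ⟨k₀, ⟨(k₀:ℕ)+1, by omega⟩, rfl, rfl⟩
    have hab : a ≠ b := by
      intro he
      rw [Fin.ext_iff, hav, hbv] at he
      omega
    have hba : b ≠ a := hab.symm
    have hfun : ∀ j : Fin (n+2), x j =
        (if j = a then (1 + y₁) / y₂ else 1) * (if j = b then y₂ else 1) := by
      intro j
      rw [hxj j, if_pos hk]
      by_cases h1 : j = a
      · subst h1
        rw [if_pos hav, if_pos rfl, if_neg hab, mul_one]
      · by_cases h2 : j = b
        · subst h2
          rw [if_neg (by rw [hbv]; omega), if_pos hbv, if_neg hba, if_pos rfl, one_mul]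
        · rw [if_neg (fun he => h1 (Fin.ext (he.trans hav.symm))),
            if_neg (fun he => h2 (Fin.ext (he.trans hbv.symm))),
            if_neg h1, if_neg h2, mul_one]
    have hvfun : ∀ j : Fin (n+2), val (x j) =
        (if j = a then val (1 + y₁) - val y₂ else 0) + (if j = b then val y₂ else 0) := by
      intro j
      rw [hfun j]
      by_cases h1 : j = a
      · subst h1
        rw [if_pos rfl, if_neg hab, if_pos rfl, if_neg hab, mul_one, add_zero]
        exact val_div h1y hy₂
      · by_cases h2 : j = b
        · subst h2
          rw [if_neg h1, if_pos rfl, if_neg h1, if_pos rfl, one_mul, zero_add]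
        · rw [if_neg h1, if_neg h2, if_neg h1, if_neg h2, one_mul, add_zero]
          exact val_one
    have hprod : (∏ j, x j) = 1 + y₁ := by
      rw [Finset.prod_congr rfl (fun j _ => hfun j), Finset.prod_mul_distrib]
      simp only [Finset.prod_ite_eq', Finset.mem_univ, if_true]
      exact div_mul_cancel₀ _ hy₂
    have hsum : ∀ r : ℝ, (∑ j : Fin (n+2), (((j:ℕ):ℝ) - r) * val (x j))
        = (((k₀:ℕ):ℝ) - r) * val (1 + y₁) + val y₂ := by
      intro r
      have hterm : ∀ j : Fin (n+2), (((j:ℕ):ℝ) - r) * val (x j)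
          = (if j = a then (((a:ℕ):ℝ) - r) * (val (1 + y₁) - val y₂) else 0)
            + (if j = b then (((b:ℕ):ℝ) - r) * val y₂ else 0) := by
        intro j
        rw [hvfun j]
        by_cases h1 : j = a
        · subst h1
          rw [if_pos rfl, if_neg hab, if_pos rfl, if_neg hab]
          ring
        · by_cases h2 : j = b
          · subst h2
            rw [if_neg h1, if_pos rfl, if_neg h1, if_pos rfl]
            ring
          · rw [if_neg h1, if_neg h2, if_neg h1, if_neg h2]
            ring
      rw [Finset.sum_congr rfl (fun j _ => hterm j), Finset.sum_add_distrib,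
        Finset.sum_ite_eq', Finset.sum_ite_eq']
      simp only [Finset.mem_univ, if_true]
      rw [hav, hbv]
      push_cast
      ring
    exact ⟨hxne, hprod, Fmap_eq_of_sum n ψ hord y₁ y₂ hy₁ h1y k₀ s c hs hc x hsum hreg⟩
  · -- chart with `k₀ = n + 1`
    have hk' : (k₀:ℕ) = n + 1 := by omega
    obtain ⟨a, b, hav, hbv⟩ : ∃ a b : Fin (n+2), (a:ℕ) = n ∧ (b:ℕ) = n+1 :=
      ⟨⟨n, by omega⟩, ⟨n+1, by omega⟩, rfl, rfl⟩
    have hab : a ≠ b := by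
      intro he
      rw [Fin.ext_iff, hav, hbv] at he
      omega
    have hba : b ≠ a := hab.symm
    have hfun : ∀ j : Fin (n+2), x j =
        (if j = a then 1 / y₂ else 1) * (if j = b then y₂ * (1 + y₁) else 1) := by
      intro j
      rw [hxj j, if_neg (not_le.2 hk)]
      by_cases h1 : j = a
      · subst h1
        rw [if_pos hav, if_pos rfl, if_neg hab, mul_one]
      · by_cases h2 : j = b
        · subst h2
          rw [if_neg (by rw [hbv]; omega), if_pos hbv, if_neg hba, if_pos rfl, one_mul]
        · rw [if_neg (fun he => h1 (Fin.ext (he.trans hav.symm))),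
            if_neg (fun he => h2 (Fin.ext (he.trans hbv.symm))),
            if_neg h1, if_neg h2, mul_one]
    have hvfun : ∀ j : Fin (n+2), val (x j) =
        (if j = a then -val y₂ else 0)
          + (if j = b then val y₂ + val (1 + y₁) else 0) := by
      intro j
      rw [hfun j]
      by_cases h1 : j = a
      · subst h1
        rw [if_pos rfl, if_neg hab, if_pos rfl, if_neg hab, mul_one, add_zero,
          val_div one_ne_zero hy₂, val_one, zero_sub]
      · by_cases h2 : j = b
        · subst h2
          rw [if_neg h1, if_pos rfl, if_neg h1, if_pos rfl, one_mul, zero_add]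
          exact val_mul hy₂ h1y
        · rw [if_neg h1, if_neg h2, if_neg h1, if_neg h2, one_mul, add_zero]
          exact val_one
    have hprod : (∏ j, x j) = 1 + y₁ := by
      rw [Finset.prod_congr rfl (fun j _ => hfun j), Finset.prod_mul_distrib]
      simp only [Finset.prod_ite_eq', Finset.mem_univ, if_true]
      rw [one_div, inv_mul_cancel_left₀ hy₂]
    have hsum : ∀ r : ℝ, (∑ j : Fin (n+2), (((j:ℕ):ℝ) - r) * val (x j))
        = (((k₀:ℕ):ℝ) - r) * val (1 + y₁) + val y₂ := by
      intro r
      have hterm : ∀ j : Fin (n+2), (((j:ℕ):ℝ) - r) * val (x j)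
          = (if j = a then (((a:ℕ):ℝ) - r) * (-val y₂) else 0)
            + (if j = b then (((b:ℕ):ℝ) - r) * (val y₂ + val (1 + y₁)) else 0) := by
        intro j
        rw [hvfun j]
        by_cases h1 : j = a
        · subst h1
          rw [if_pos rfl, if_neg hab, if_pos rfl, if_neg hab]
          ring
        · by_cases h2 : j = b
          · subst h2
            rw [if_neg h1, if_pos rfl, if_neg h1, if_pos rfl]
            ring
          · rw [if_neg h1, if_neg h2, if_neg h1, if_neg h2]
            ring
      rw [Finset.sum_congr rfl (fun j _ => hterm j), Finset.sum_add_distrib,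
        Finset.sum_ite_eq', Finset.sum_ite_eq']
      simp only [Finset.mem_univ, if_true]
      rw [hav, hbv, hk']
      push_cast
      ring
    exact ⟨hxne, hprod, Fmap_eq_of_sum n ψ hord y₁ y₂ hy₁ h1y k₀ s c hs hc x hsum hreg⟩
end
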